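/- Let X and Y be Banach spaces that admit uniformly complemented copies of ℓ²_n for each n: there is a constant C ≥ 1 such that for every n there exist a bounded projection P_n on X with ‖P_n‖ ≤ C whose range is C-isomorphic to ℓ²_n, and similarly for Y. Then for every s-numbers sequence s and all 0<p<∞, 0<q≤∞, the inclusion of L^{(s)}_{p,q}(X,Y) into the approximable operators L^A(X,Y) is strict: there exists an approximable operator T ∈ L^A(X,Y) with T ∉ L^{(s)}_{p,q}(X,Y). -/

import Mathlib

open Filter Topology
open scoped ENNReal NNReal
open scoped Classical

noncomputable section

/-- An `s`-numbers sequence (s-numbers scale) in the sense of Pietsch: a rule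
assigning to every bounded operator between Banach spaces a non-increasing sequence
of non-negative reals, starting at the operator norm, additive and multiplicative in
the index, normalized on the identities of the Euclidean spaces `ℓ²_n`, and vanishing
on operators of small rank. Here `s X Y T n` represents `s_{n+1}(T)`. -/
structure SNumberScale where
  s : ∀ (X Y : Type) [NormedAddCommGroup X] [NormedSpace ℝ X] [CompleteSpace X]
      [NormedAddCommGroup Y] [NormedSpace ℝ Y] [CompleteSpace Y],
      (X →L[ℝ] Y) → ℕ → ℝ
  nonneg : ∀ (X Y : Type) [NormedAddCommGroup X] [NormedSpace ℝ X] [CompleteSpace X]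
      [NormedAddCommGroup Y] [NormedSpace ℝ Y] [CompleteSpace Y]
      (T : X →L[ℝ] Y) (n : ℕ), 0 ≤ s X Y T n
  antitone : ∀ (X Y : Type) [NormedAddCommGroup X] [NormedSpace ℝ X] [CompleteSpace X]
      [NormedAddCommGroup Y] [NormedSpace ℝ Y] [CompleteSpace Y]
      (T : X →L[ℝ] Y) (n : ℕ), s X Y T (n + 1) ≤ s X Y T n
  first_eq_norm : ∀ (X Y : Type) [NormedAddCommGroup X] [NormedSpace ℝ X]
      [CompleteSpace X] [NormedAddCommGroup Y] [NormedSpace ℝ Y] [CompleteSpace Y]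
      (T : X →L[ℝ] Y), s X Y T 0 = ‖T‖
  add_le : ∀ (X Y : Type) [NormedAddCommGroup X] [NormedSpace ℝ X] [CompleteSpace X]
      [NormedAddCommGroup Y] [NormedSpace ℝ Y] [CompleteSpace Y]
      (S T : X →L[ℝ] Y) (n m : ℕ),
      s X Y (S + T) (n + m) ≤ s X Y S n + s X Y T m
  comp_le : ∀ (X Y Z : Type) [NormedAddCommGroup X] [NormedSpace ℝ X] [CompleteSpace X]
      [NormedAddCommGroup Y] [NormedSpace ℝ Y] [CompleteSpace Y]
      [NormedAddCommGroup Z] [NormedSpace ℝ Z] [CompleteSpace Z]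
      (S : X →L[ℝ] Y) (T : Y →L[ℝ] Z) (n m : ℕ),
      s X Z (T.comp S) (n + m) ≤ s Y Z T n * s X Y S m
  id_euclidean : ∀ n : ℕ,
      s (EuclideanSpace ℝ (Fin (n + 1))) (EuclideanSpace ℝ (Fin (n + 1)))
        (ContinuousLinearMap.id ℝ (EuclideanSpace ℝ (Fin (n + 1)))) n = 1
  rank_small : ∀ (X Y : Type) [NormedAddCommGroup X] [NormedSpace ℝ X] [CompleteSpace X]
      [NormedAddCommGroup Y] [NormedSpace ℝ Y] [CompleteSpace Y]
      (T : X →L[ℝ] Y) (n : ℕ),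
      Module.rank ℝ (LinearMap.range (T : X →ₗ[ℝ] Y)) < ((n : Cardinal) + 1) → s X Y T n = 0

variable {X Y : Type*} [NormedAddCommGroup X] [NormedSpace ℝ X]
  [NormedAddCommGroup Y] [NormedSpace ℝ Y]

/-- An approximable operator: a member of the operator-norm closure of the
finite-rank operators. -/
def IsApproximable (T : X →L[ℝ] Y) : Prop :=
  T ∈ closure {R : X →L[ℝ] Y | FiniteDimensional ℝ (LinearMap.range (R : X →ₗ[ℝ] Y))}

/-- `X` admits, for each `n`, a `C`-complemented subspace `C`-isomorphic to `ℓ²_n`. -/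
def UnifComplEuclidean (C : ℝ) (X : Type*) [NormedAddCommGroup X] [NormedSpace ℝ X] :
    Prop :=
  ∀ n : ℕ, ∃ P : X →L[ℝ] X, P.comp P = P ∧ ‖P‖ ≤ C ∧
    ∃ u : ↥(LinearMap.range (P : X →ₗ[ℝ] X)) ≃L[ℝ] EuclideanSpace ℝ (Fin (n + 1)),
      ‖(u : ↥(LinearMap.range (P : X →ₗ[ℝ] X)) →L[ℝ] EuclideanSpace ℝ (Fin (n + 1)))‖ ≤ C ∧
      ‖(u.symm : EuclideanSpace ℝ (Fin (n + 1)) →L[ℝ] ↥(LinearMap.range (P : X →ₗ[ℝ] X)))‖ ≤ C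

/-- Membership in `L^{(s)}_{p,q}(X,Y)` for an s-numbers scale `σ`. -/
def memLs (σ : SNumberScale) (p : ℝ) (q : ℝ≥0∞)
    (X Y : Type) [NormedAddCommGroup X] [NormedSpace ℝ X] [CompleteSpace X]
    [NormedAddCommGroup Y] [NormedSpace ℝ Y] [CompleteSpace Y]
    (T : X →L[ℝ] Y) : Prop :=
  if q = ⊤ then ∃ M : ℝ, ∀ n : ℕ, ((n : ℝ) + 1) ^ (1/p) * σ.s X Y T n ≤ M
  else Summable (fun n : ℕ =>
    (((n : ℝ) + 1) ^ (1/p - 1/q.toReal) * σ.s X Y T n) ^ q.toReal)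

end

noncomputable section AuxSec

/-! ### Numerical auxiliary definitions -/

/-- geometric ratio -/
def auxEps (C : ℝ) : ℝ := 1 / (4 * C ^ 6)

/-- lower bound for the s-numbers -/
def auxDelta (C : ℝ) (m : ℕ) : ℝ := auxEps C ^ m / (2 * C ^ 3)

/-- length of the m-th good block -/
def auxN (C p q' : ℝ) (m : ℕ) : ℕ :=
  ⌈((m + 1 : ℝ) / auxDelta C m) ^ p⌉₊ + ⌈(m + 1 : ℝ) / auxDelta C m ^ q'⌉₊ +
    ⌈((m + 1 : ℝ) / auxDelta C m ^ q') ^ (p / q')⌉₊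

/-- cumulated ranks before block m -/
def auxR (C p q' : ℝ) : ℕ → ℕ
  | 0 => 0
  | m + 1 => auxR C p q' m + (auxR C p q' m + auxN C p q' m) + 1

/-- dimension parameter of the m-th block -/
def auxn (C p q' : ℝ) (m : ℕ) : ℕ := auxR C p q' m + auxN C p q' m

lemma auxR_eq_sum (C p q' : ℝ) (m : ℕ) :
    auxR C p q' m = ∑ j ∈ Finset.range m, (auxn C p q' j + 1) := by
  induction m with
  | zero => simp [auxR]
  | succ m ih => rw [Finset.sum_range_succ, ← ih]; simp only [auxR, auxn]; omega

lemma auxEps_pos {C : ℝ} (hC : 1 ≤ C) : 0 < auxEps C := by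
  have : (0:ℝ) < C := lt_of_lt_of_le one_pos hC
  unfold auxEps; positivity

lemma auxEps_le_half {C : ℝ} (hC : 1 ≤ C) : auxEps C ≤ 1/2 := by
  have h6 : (1:ℝ) ≤ C ^ 6 := one_le_pow₀ hC
  rw [auxEps, div_le_div_iff₀ (by nlinarith) (by norm_num)]
  nlinarith

lemma auxDelta_pos {C : ℝ} (hC : 1 ≤ C) (m : ℕ) : 0 < auxDelta C m := by
  have h := auxEps_pos hC
  have : (0:ℝ) < C := lt_of_lt_of_le one_pos hC
  unfold auxDelta; positivity

/-- First choice property of `auxN`: the `q = ∞` case. -/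
lemma auxN_prop1 {C p q' : ℝ} (hC : 1 ≤ C) (hp : 0 < p) (m : ℕ) :
    (m + 1 : ℝ) ≤ ((auxN C p q' m : ℝ) + 1) ^ (1/p) * auxDelta C m := by
  have hceil : ⌈((m + 1 : ℝ) / auxDelta C m) ^ p⌉₊ ≤ auxN C p q' m := by
    unfold auxN; omega
  set δ := auxDelta C m with hδ
  have hδpos : 0 < δ := auxDelta_pos hC m
  set x := ((m + 1 : ℝ) / δ) ^ p with hx
  have hxnn : 0 ≤ x := by positivity
  have h1 : x ≤ (auxN C p q' m : ℝ) + 1 := by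
    calc x ≤ (⌈x⌉₊ : ℝ) := Nat.le_ceil x
    _ ≤ (auxN C p q' m : ℝ) + 1 :=
        le_trans (Nat.cast_le.mpr hceil) (by linarith)
  have h2 : x ^ (1/p) ≤ ((auxN C p q' m : ℝ) + 1) ^ (1/p) :=
    Real.rpow_le_rpow hxnn h1 (by positivity)
  have h3 : x ^ (1/p) = (m + 1 : ℝ) / δ := by
    rw [hx, ← Real.rpow_mul (by positivity), mul_one_div_cancel hp.ne', Real.rpow_one]
  rw [h3] at h2
  calc (m + 1 : ℝ) = ((m+1:ℝ)/δ) * δ := by field_simp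
  _ ≤ ((auxN C p q' m : ℝ) + 1) ^ (1/p) * δ := by
      exact mul_le_mul_of_nonneg_right h2 hδpos.le

/-- Second choice property: the `α ≥ 0` case for finite `q`. -/
lemma auxN_prop2 {C p q' : ℝ} (hC : 1 ≤ C) (m : ℕ) :
    (m + 1 : ℝ) ≤ ((auxN C p q' m : ℝ) + 1) * auxDelta C m ^ q' := by
  have hceil : ⌈(m + 1 : ℝ) / auxDelta C m ^ q'⌉₊ ≤ auxN C p q' m := by
    unfold auxN; omega
  set δ := auxDelta C m with hδ
  have hδpos : 0 < δ := auxDelta_pos hC m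
  have hδq : 0 < δ ^ q' := Real.rpow_pos_of_pos hδpos q'
  set x := (m + 1 : ℝ) / δ ^ q' with hx
  have h1 : x ≤ (auxN C p q' m : ℝ) + 1 := by
    calc x ≤ (⌈x⌉₊ : ℝ) := Nat.le_ceil x
    _ ≤ (auxN C p q' m : ℝ) + 1 :=
        le_trans (Nat.cast_le.mpr hceil) (by linarith)
  calc (m + 1 : ℝ) = x * δ ^ q' := by rw [hx]; field_simp
  _ ≤ ((auxN C p q' m : ℝ) + 1) * δ ^ q' := mul_le_mul_of_nonneg_right h1 hδq.le

/-- Third choice property: the `α < 0` case for finite `q`. -/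
lemma auxN_prop3 {C p q' : ℝ} (hC : 1 ≤ C) (hp : 0 < p) (hq' : 0 < q') (m : ℕ) :
    (m + 1 : ℝ) ≤ ((auxN C p q' m : ℝ) + 1) ^ (q'/p) * auxDelta C m ^ q' := by
  have hceil : ⌈((m + 1 : ℝ) / auxDelta C m ^ q') ^ (p / q')⌉₊ ≤ auxN C p q' m := by
    unfold auxN; omega
  set δ := auxDelta C m with hδ
  have hδpos : 0 < δ := auxDelta_pos hC m
  have hδq : 0 < δ ^ q' := Real.rpow_pos_of_pos hδpos q'
  set y := ((m + 1 : ℝ) / δ ^ q') ^ (p / q') with hy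
  have hynn : 0 ≤ y := by rw [hy]; positivity
  have h1 : y ≤ (auxN C p q' m : ℝ) + 1 := by
    calc y ≤ (⌈y⌉₊ : ℝ) := Nat.le_ceil y
    _ ≤ (auxN C p q' m : ℝ) + 1 :=
        le_trans (Nat.cast_le.mpr hceil) (by linarith)
  have h2 : y ^ (q'/p) ≤ ((auxN C p q' m : ℝ) + 1) ^ (q'/p) :=
    Real.rpow_le_rpow hynn h1 (by positivity)
  have h3 : y ^ (q'/p) = (m + 1 : ℝ) / δ ^ q' := by
    rw [hy, ← Real.rpow_mul (by positivity)]
    rw [div_mul_div_comm, mul_comm, ← div_mul_div_comm, div_self hp.ne', div_self hq'.ne',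
      one_mul, Real.rpow_one]
  rw [h3] at h2
  calc (m + 1 : ℝ) = ((m+1:ℝ)/δ ^ q') * δ ^ q' := by field_simp
  _ ≤ ((auxN C p q' m : ℝ) + 1) ^ (q'/p) * δ ^ q' := mul_le_mul_of_nonneg_right h2 hδq.le

end AuxSec
section BuildSec
set_option maxHeartbeats 1000000
set_option synthInstance.maxHeartbeats 1000000
set_option linter.unusedSectionVars false

variable {X Y : Type} [NormedAddCommGroup X] [NormedSpace ℝ X] [CompleteSpace X]
  [NormedAddCommGroup Y] [NormedSpace ℝ Y] [CompleteSpace Y]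

/-- Corestriction of an operator onto its range. -/
noncomputable def projCLM (P : X →L[ℝ] X) : X →L[ℝ] ↥(LinearMap.range (P : X →ₗ[ℝ] X)) :=
  P.codRestrict _ (fun x => LinearMap.mem_range_self _ x)

lemma norm_projCLM_le (P : X →L[ℝ] X) : ‖projCLM P‖ ≤ ‖P‖ := by
  apply ContinuousLinearMap.opNorm_le_bound _ (norm_nonneg P)
  intro x
  have : ‖projCLM P x‖ = ‖P x‖ := rfl
  rw [this]
  exact P.le_opNorm x

lemma projCLM_subtype (P : X →L[ℝ] X) (hP : P.comp P = P) (w : ↥(LinearMap.range (P : X →ₗ[ℝ] X))) :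
    projCLM P ((LinearMap.range (P : X →ₗ[ℝ] X)).subtypeL w) = w := by
  obtain ⟨v, a, ha⟩ := w
  apply Subtype.ext
  show P v = v
  rw [← ha]
  exact ContinuousLinearMap.ext_iff.mp hP a

variable {n : ℕ}

/-- The basic block operator `X → ℓ²_{n+1} → Y`. -/
noncomputable def buildT (P : X →L[ℝ] X) (Q : Y →L[ℝ] Y)
    (uX : ↥(LinearMap.range (P : X →ₗ[ℝ] X)) ≃L[ℝ] EuclideanSpace ℝ (Fin (n + 1)))
    (uY : ↥(LinearMap.range (Q : Y →ₗ[ℝ] Y)) ≃L[ℝ] EuclideanSpace ℝ (Fin (n + 1))) : X →L[ℝ] Y :=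
  ((LinearMap.range (Q : Y →ₗ[ℝ] Y)).subtypeL.comp
    (uY.symm : EuclideanSpace ℝ (Fin (n + 1)) →L[ℝ] ↥(LinearMap.range (Q : Y →ₗ[ℝ] Y)))).comp
  (((uX : ↥(LinearMap.range (P : X →ₗ[ℝ] X)) →L[ℝ] EuclideanSpace ℝ (Fin (n + 1)))).comp (projCLM P))

lemma norm_buildT_le {C : ℝ} (hC : 1 ≤ C) (P : X →L[ℝ] X) (Q : Y →L[ℝ] Y)
    (uX : ↥(LinearMap.range (P : X →ₗ[ℝ] X)) ≃L[ℝ] EuclideanSpace ℝ (Fin (n + 1)))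
    (uY : ↥(LinearMap.range (Q : Y →ₗ[ℝ] Y)) ≃L[ℝ] EuclideanSpace ℝ (Fin (n + 1)))
    (hPn : ‖P‖ ≤ C)
    (huX : ‖(uX : ↥(LinearMap.range (P : X →ₗ[ℝ] X)) →L[ℝ] EuclideanSpace ℝ (Fin (n + 1)))‖ ≤ C)
    (huYs : ‖(uY.symm : EuclideanSpace ℝ (Fin (n + 1)) →L[ℝ] ↥(LinearMap.range (Q : Y →ₗ[ℝ] Y)))‖ ≤ C) :
    ‖buildT P Q uX uY‖ ≤ C ^ 3 := by
  have hC0 : (0:ℝ) ≤ C := le_trans zero_le_one hC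
  have h1 : ‖(LinearMap.range (Q : Y →ₗ[ℝ] Y)).subtypeL.comp
      (uY.symm : EuclideanSpace ℝ (Fin (n + 1)) →L[ℝ] ↥(LinearMap.range (Q : Y →ₗ[ℝ] Y)))‖ ≤ C := by
    calc ‖(LinearMap.range (Q : Y →ₗ[ℝ] Y)).subtypeL.comp (uY.symm : EuclideanSpace ℝ (Fin (n + 1)) →L[ℝ] ↥(LinearMap.range (Q : Y →ₗ[ℝ] Y)))‖
        ≤ ‖(LinearMap.range (Q : Y →ₗ[ℝ] Y)).subtypeL‖ * ‖(uY.symm : EuclideanSpace ℝ (Fin (n + 1)) →L[ℝ] ↥(LinearMap.range (Q : Y →ₗ[ℝ] Y)))‖ :=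
          ContinuousLinearMap.opNorm_comp_le _ _
    _ ≤ 1 * C := mul_le_mul (Submodule.norm_subtypeL_le _) huYs (ContinuousLinearMap.opNorm_nonneg _) zero_le_one
    _ = C := one_mul C
  have h2 : ‖((uX : ↥(LinearMap.range (P : X →ₗ[ℝ] X)) →L[ℝ] EuclideanSpace ℝ (Fin (n + 1)))).comp (projCLM P)‖
      ≤ C * C := by
    calc ‖((uX : ↥(LinearMap.range (P : X →ₗ[ℝ] X)) →L[ℝ] EuclideanSpace ℝ (Fin (n + 1)))).comp (projCLM P)‖
        ≤ ‖(uX : ↥(LinearMap.range (P : X →ₗ[ℝ] X)) →L[ℝ] EuclideanSpace ℝ (Fin (n + 1)))‖ * ‖projCLM P‖ :=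
          ContinuousLinearMap.opNorm_comp_le _ _
    _ ≤ C * C := mul_le_mul huX (le_trans (norm_projCLM_le P) hPn) (ContinuousLinearMap.opNorm_nonneg _) hC0
  calc ‖buildT P Q uX uY‖ ≤ C * (C * C) :=
        le_trans (ContinuousLinearMap.opNorm_comp_le _ _)
          (mul_le_mul h1 h2 (norm_nonneg _) hC0)
  _ = C ^ 3 := by ring

lemma buildT_factor (P : X →L[ℝ] X) (Q : Y →L[ℝ] Y)
    (uX : ↥(LinearMap.range (P : X →ₗ[ℝ] X)) ≃L[ℝ] EuclideanSpace ℝ (Fin (n + 1)))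
    (uY : ↥(LinearMap.range (Q : Y →ₗ[ℝ] Y)) ≃L[ℝ] EuclideanSpace ℝ (Fin (n + 1)))
    (hP : P.comp P = P) (hQ : Q.comp Q = Q) :
    (((uY : ↥(LinearMap.range (Q : Y →ₗ[ℝ] Y)) →L[ℝ] EuclideanSpace ℝ (Fin (n + 1)))).comp
        (projCLM Q)).comp
      ((buildT P Q uX uY).comp
        ((LinearMap.range (P : X →ₗ[ℝ] X)).subtypeL.comp
          (uX.symm : EuclideanSpace ℝ (Fin (n + 1)) →L[ℝ] ↥(LinearMap.range (P : X →ₗ[ℝ] X))))) =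
    ContinuousLinearMap.id ℝ (EuclideanSpace ℝ (Fin (n + 1))) := by
  refine ContinuousLinearMap.ext fun z => ?_
  simp only [ContinuousLinearMap.comp_apply, buildT, ContinuousLinearMap.coe_coe,
    ContinuousLinearMap.id_apply]
  rw [projCLM_subtype P hP]
  rw [show (uX : ↥(LinearMap.range (P : X →ₗ[ℝ] X)) →L[ℝ] EuclideanSpace ℝ (Fin (n+1)))
      ((uX.symm : EuclideanSpace ℝ (Fin (n+1)) →L[ℝ] ↥(LinearMap.range (P : X →ₗ[ℝ] X))) z) = z from
    uX.apply_symm_apply z]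
  rw [projCLM_subtype Q hQ]
  exact uY.apply_symm_apply z

lemma rank_buildT_le (P : X →L[ℝ] X) (Q : Y →L[ℝ] Y)
    (uX : ↥(LinearMap.range (P : X →ₗ[ℝ] X)) ≃L[ℝ] EuclideanSpace ℝ (Fin (n + 1)))
    (uY : ↥(LinearMap.range (Q : Y →ₗ[ℝ] Y)) ≃L[ℝ] EuclideanSpace ℝ (Fin (n + 1))) :
    Module.rank ℝ (LinearMap.range (buildT P Q uX uY : X →ₗ[ℝ] Y)) ≤ ((n + 1 : ℕ) : Cardinal) := by
  have hco : (buildT P Q uX uY : X →ₗ[ℝ] Y) =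
      (((LinearMap.range (Q : Y →ₗ[ℝ] Y)).subtypeL.comp
        (uY.symm : EuclideanSpace ℝ (Fin (n + 1)) →L[ℝ] ↥(LinearMap.range (Q : Y →ₗ[ℝ] Y))) :
          EuclideanSpace ℝ (Fin (n + 1)) →L[ℝ] Y) : EuclideanSpace ℝ (Fin (n + 1)) →ₗ[ℝ] Y).comp
      ((((uX : ↥(LinearMap.range (P : X →ₗ[ℝ] X)) →L[ℝ] EuclideanSpace ℝ (Fin (n + 1)))).comp (projCLM P) :
          X →L[ℝ] EuclideanSpace ℝ (Fin (n + 1))) : X →ₗ[ℝ] EuclideanSpace ℝ (Fin (n + 1))) := by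
    rfl
  show LinearMap.rank (buildT P Q uX uY : X →ₗ[ℝ] Y) ≤ _
  rw [hco]
  calc LinearMap.rank _ ≤ LinearMap.rank ((((uX : ↥(LinearMap.range (P : X →ₗ[ℝ] X)) →L[ℝ] EuclideanSpace ℝ (Fin (n + 1)))).comp (projCLM P) : X →L[ℝ] EuclideanSpace ℝ (Fin (n + 1))) : X →ₗ[ℝ] EuclideanSpace ℝ (Fin (n + 1))) :=
        LinearMap.rank_comp_le_right _ _
  _ ≤ Module.rank ℝ (EuclideanSpace ℝ (Fin (n + 1))) := LinearMap.rank_le_range _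
  _ = ((n + 1 : ℕ) : Cardinal) := by
      rw [← Module.finrank_eq_rank, finrank_euclideanSpace, Fintype.card_fin]

end BuildSec
section SNumSec
set_option maxHeartbeats 1000000
set_option synthInstance.maxHeartbeats 1000000
set_option linter.unusedSectionVars false

variable (σ : SNumberScale) (X Y : Type)
  [NormedAddCommGroup X] [NormedSpace ℝ X] [CompleteSpace X]
  [NormedAddCommGroup Y] [NormedSpace ℝ Y] [CompleteSpace Y]

lemma s_antitone (T : X →L[ℝ] Y) : Antitone (σ.s X Y T) :=
  antitone_nat_of_succ_le (σ.antitone X Y T)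

lemma s_le_norm (T : X →L[ℝ] Y) (k : ℕ) : σ.s X Y T k ≤ ‖T‖ := by
  rw [← σ.first_eq_norm X Y T]
  exact s_antitone σ X Y T (Nat.zero_le k)

lemma s_smul_le (c : ℝ) (T : X →L[ℝ] Y) (k : ℕ) :
    σ.s X Y (c • T) k ≤ |c| * σ.s X Y T k := by
  have h : c • T = (c • ContinuousLinearMap.id ℝ Y).comp T := by
    refine ContinuousLinearMap.ext fun x => ?_
    simp
  have h2 := σ.comp_le X Y Y T (c • ContinuousLinearMap.id ℝ Y) 0 k
  rw [σ.first_eq_norm, zero_add] at h2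
  rw [h]
  refine le_trans h2 (mul_le_mul_of_nonneg_right ?_ (σ.nonneg X Y T k))
  refine ContinuousLinearMap.opNorm_le_bound _ (abs_nonneg c) fun x => ?_
  simp [norm_smul, abs_mul]

lemma le_s_smul (c : ℝ) (hc : c ≠ 0) (T : X →L[ℝ] Y) (k : ℕ) :
    |c| * σ.s X Y T k ≤ σ.s X Y (c • T) k := by
  have h := s_smul_le σ X Y c⁻¹ (c • T) k
  rw [smul_smul, inv_mul_cancel₀ hc, one_smul] at h
  have h2 := mul_le_mul_of_nonneg_left h (abs_nonneg c)
  rwa [abs_inv, ← mul_assoc, mul_inv_cancel₀ (abs_ne_zero.mpr hc), one_mul] at h2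

/-- rank bound for a finite sum of operators. -/
lemma rank_range_sum_le {ι : Type} (s : Finset ι) (g : ι → X →L[ℝ] Y) (r : ι → ℕ)
    (h : ∀ i ∈ s, Module.rank ℝ (LinearMap.range (g i : X →ₗ[ℝ] Y)) ≤ ((r i : ℕ) : Cardinal)) :
    Module.rank ℝ (LinearMap.range ((∑ i ∈ s, g i : X →L[ℝ] Y) : X →ₗ[ℝ] Y)) ≤ ((∑ i ∈ s, r i : ℕ) : Cardinal) := by
  have hcoe : ((∑ i ∈ s, g i : X →L[ℝ] Y) : X →ₗ[ℝ] Y) = ∑ i ∈ s, ((g i : X →L[ℝ] Y) : X →ₗ[ℝ] Y) := by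
    simp
  show LinearMap.rank ((∑ i ∈ s, g i : X →L[ℝ] Y) : X →ₗ[ℝ] Y) ≤ _
  rw [hcoe]
  calc LinearMap.rank (∑ i ∈ s, ((g i : X →L[ℝ] Y) : X →ₗ[ℝ] Y))
      ≤ ∑ i ∈ s, LinearMap.rank ((g i : X →L[ℝ] Y) : X →ₗ[ℝ] Y) :=
        LinearMap.rank_finset_sum_le s _
  _ ≤ ∑ i ∈ s, ((r i : ℕ) : Cardinal) := Finset.sum_le_sum h
  _ = ((∑ i ∈ s, r i : ℕ) : Cardinal) := by rw [Nat.cast_sum]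

lemma finiteDimensional_range_sum {ι : Type} (s : Finset ι) (g : ι → X →L[ℝ] Y) (r : ι → ℕ)
    (h : ∀ i ∈ s, Module.rank ℝ (LinearMap.range (g i : X →ₗ[ℝ] Y)) ≤ ((r i : ℕ) : Cardinal)) :
    FiniteDimensional ℝ (LinearMap.range ((∑ i ∈ s, g i : X →L[ℝ] Y) : X →ₗ[ℝ] Y)) := by
  exact Module.rank_lt_aleph0_iff.mp
    (lt_of_le_of_lt (rank_range_sum_le X Y s g r h) (Cardinal.nat_lt_aleph0 _))

lemma rank_range_smul_le (c : ℝ) (T : X →L[ℝ] Y) (r : ℕ)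
    (h : Module.rank ℝ (LinearMap.range (T : X →ₗ[ℝ] Y)) ≤ ((r : ℕ) : Cardinal)) :
    Module.rank ℝ (LinearMap.range ((c • T : X →L[ℝ] Y) : X →ₗ[ℝ] Y)) ≤ ((r : ℕ) : Cardinal) := by
  refine le_trans (Submodule.rank_mono ?_) h
  intro y hy
  obtain ⟨x, hx⟩ := hy
  exact ⟨c • x, by rw [← hx]; simp⟩

/-- Key lower bound for the block operator. -/
lemma one_le_s_buildT {C : ℝ} (hC : 1 ≤ C) {n : ℕ} (P : X →L[ℝ] X) (Q : Y →L[ℝ] Y)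
    (uX : ↥(LinearMap.range (P : X →ₗ[ℝ] X)) ≃L[ℝ] EuclideanSpace ℝ (Fin (n + 1)))
    (uY : ↥(LinearMap.range (Q : Y →ₗ[ℝ] Y)) ≃L[ℝ] EuclideanSpace ℝ (Fin (n + 1)))
    (hP : P.comp P = P) (hQ : Q.comp Q = Q) (hQn : ‖Q‖ ≤ C)
    (huY : ‖(uY : ↥(LinearMap.range (Q : Y →ₗ[ℝ] Y)) →L[ℝ] EuclideanSpace ℝ (Fin (n + 1)))‖ ≤ C)
    (huXs : ‖(uX.symm : EuclideanSpace ℝ (Fin (n + 1)) →L[ℝ] ↥(LinearMap.range (P : X →ₗ[ℝ] X)))‖ ≤ C)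
    {k : ℕ} (hk : k ≤ n) :
    1 ≤ C ^ 3 * σ.s X Y (buildT P Q uX uY) k := by
  have hC0 : (0:ℝ) < C := lt_of_lt_of_le one_pos hC
  set E := EuclideanSpace ℝ (Fin (n + 1))
  set A : Y →L[ℝ] E :=
    ((uY : ↥(LinearMap.range (Q : Y →ₗ[ℝ] Y)) →L[ℝ] E)).comp (projCLM Q) with hA
  set B : E →L[ℝ] X :=
    (LinearMap.range (P : X →ₗ[ℝ] X)).subtypeL.comp (uX.symm : E →L[ℝ] ↥(LinearMap.range (P : X →ₗ[ℝ] X))) with hB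
  have hAn : ‖A‖ ≤ C * C := by
    refine le_trans (ContinuousLinearMap.opNorm_comp_le _ _) ?_
    exact mul_le_mul huY (le_trans (norm_projCLM_le Q) hQn)
      (ContinuousLinearMap.opNorm_nonneg _) hC0.le
  have hBn : ‖B‖ ≤ C := by
    refine le_trans (ContinuousLinearMap.opNorm_comp_le _ _) ?_
    calc ‖(LinearMap.range (P : X →ₗ[ℝ] X)).subtypeL‖ * ‖(uX.symm : E →L[ℝ] ↥(LinearMap.range (P : X →ₗ[ℝ] X)))‖
        ≤ 1 * C := mul_le_mul (Submodule.norm_subtypeL_le _) huXs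
          (ContinuousLinearMap.opNorm_nonneg _) zero_le_one
    _ = C := one_mul C
  have hfac := buildT_factor P Q uX uY hP hQ
  have h1 : (1:ℝ) = σ.s E E (A.comp ((buildT P Q uX uY).comp B)) n := by
    rw [hfac, σ.id_euclidean n]
  have h2 := σ.comp_le E Y E ((buildT P Q uX uY).comp B) A 0 n
  rw [σ.first_eq_norm, zero_add] at h2
  have h3 := σ.comp_le E X Y B (buildT P Q uX uY) n 0
  rw [σ.first_eq_norm, add_zero] at h3
  have hmono : σ.s X Y (buildT P Q uX uY) n ≤ σ.s X Y (buildT P Q uX uY) k :=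
    s_antitone σ X Y _ hk
  have hs0 : 0 ≤ σ.s X Y (buildT P Q uX uY) n := σ.nonneg X Y _ n
  have hs0' : 0 ≤ σ.s E Y ((buildT P Q uX uY).comp B) n := σ.nonneg E Y _ n
  have hBnn : (0:ℝ) ≤ ‖B‖ := ContinuousLinearMap.opNorm_nonneg _
  calc (1:ℝ) = σ.s E E (A.comp ((buildT P Q uX uY).comp B)) n := h1
  _ ≤ ‖A‖ * σ.s E Y ((buildT P Q uX uY).comp B) n := h2
  _ ≤ (C * C) * σ.s E Y ((buildT P Q uX uY).comp B) n :=
      mul_le_mul_of_nonneg_right hAn hs0'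
  _ ≤ (C * C) * (σ.s X Y (buildT P Q uX uY) n * ‖B‖) := by
      refine mul_le_mul_of_nonneg_left h3 (by positivity)
  _ ≤ (C * C) * (σ.s X Y (buildT P Q uX uY) k * C) := by
      refine mul_le_mul_of_nonneg_left ?_ (by positivity)
      exact mul_le_mul hmono hBn hBnn (σ.nonneg X Y _ k)
  _ = C ^ 3 * σ.s X Y (buildT P Q uX uY) k := by ring

end SNumSec
set_option maxHeartbeats 2000000 in
set_option synthInstance.maxHeartbeats 1000000 in
/-- Let `X, Y` be Banach spaces admitting uniformly complemented
copies of `ℓ²_n` for each `n`. Then for every s-numbers sequence `s`, every `0<p<∞`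
and `0<q≤∞`, the inclusion `L^{(s)}_{p,q}(X,Y) ⊆ L^A(X,Y)` is strict: there is an
approximable operator `T` with `T ∉ L^{(s)}_{p,q}(X,Y)`. -/
theorem stmt17 (X Y : Type) [NormedAddCommGroup X] [NormedSpace ℝ X] [CompleteSpace X]
    [NormedAddCommGroup Y] [NormedSpace ℝ Y] [CompleteSpace Y]
    (C : ℝ) (hC : 1 ≤ C) (hX : UnifComplEuclidean C X) (hY : UnifComplEuclidean C Y)
    (σ : SNumberScale) (p : ℝ) (hp : 0 < p) (q : ℝ≥0∞) (hq : 0 < q) :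
    ∃ T : X →L[ℝ] Y, IsApproximable T ∧ ¬ memLs σ p q X Y T := by
  choose P hPP hPn uXe huX huXs using hX
  choose Q hQQ hQn uYe huY huYs using hY
  have hC0 : (0:ℝ) < C := lt_of_lt_of_le one_pos hC
  set q' : ℝ := q.toReal with hq'def
  set ε : ℝ := auxEps C with hεdef
  have hε0 : 0 < ε := auxEps_pos hC
  have hε2 : ε ≤ 1/2 := auxEps_le_half hC
  have hε1 : ε < 1 := lt_of_le_of_lt hε2 (by norm_num)
  set Tb : ℕ → (X →L[ℝ] Y) := fun n => buildT (P n) (Q n) (uXe n) (uYe n) with hTbdef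
  set nn : ℕ → ℕ := fun m => auxn C p q' m with hnndef
  set f : ℕ → (X →L[ℝ] Y) := fun j => ε ^ j • Tb (nn j) with hfdef
  have hTbnorm : ∀ n, ‖Tb n‖ ≤ C ^ 3 := fun n =>
    norm_buildT_le hC _ _ _ _ (hPn n) (huX n) (huYs n)
  have hTbrank : ∀ n, Module.rank ℝ (LinearMap.range (Tb n : X →ₗ[ℝ] Y)) ≤ ((n + 1 : ℕ) : Cardinal) :=
    fun n => rank_buildT_le _ _ _ _
  have hfnorm : ∀ j, ‖f j‖ ≤ C ^ 3 * ε ^ j := by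
    intro j
    show ‖ε ^ j • Tb (nn j)‖ ≤ C ^ 3 * ε ^ j
    calc ‖ε ^ j • Tb (nn j)‖ ≤ ‖(ε ^ j : ℝ)‖ * ‖Tb (nn j)‖ :=
          ContinuousLinearMap.opNorm_smul_le _ _
    _ = ε ^ j * ‖Tb (nn j)‖ := by
          rw [Real.norm_eq_abs, abs_of_pos (pow_pos hε0 j)]
    _ ≤ ε ^ j * C ^ 3 := mul_le_mul_of_nonneg_left (hTbnorm _) (pow_pos hε0 j).le
    _ = C ^ 3 * ε ^ j := mul_comm _ _
  have hgeo : Summable (fun j : ℕ => C ^ 3 * ε ^ j) :=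
    (summable_geometric_of_lt_one hε0.le hε1).mul_left _
  have hfsum : Summable f := Summable.of_norm_bounded hgeo hfnorm
  set T : X →L[ℝ] Y := ∑' j, f j with hTdef
  have hfrank : ∀ j, Module.rank ℝ (LinearMap.range (f j : X →ₗ[ℝ] Y)) ≤ ((nn j + 1 : ℕ) : Cardinal) := by
    intro j
    exact rank_range_smul_le X Y (ε ^ j) (Tb (nn j)) _ (hTbrank (nn j))
  -- the key lower bound on the s-numbers of T
  have key : ∀ m k : ℕ, k ≤ auxN C p q' m → auxDelta C m ≤ σ.s X Y T k := by
    intro m k hk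
    set Rm : ℕ := auxR C p q' m with hRmdef
    set Bl : X →L[ℝ] Y := ∑ j ∈ Finset.range m, f j with hBldef
    set Bg : X →L[ℝ] Y := ∑' j, f (j + (m + 1)) with hBgdef
    have hsplit : Bl + (f m + Bg) = T := by
      have h1 := Summable.sum_add_tsum_nat_add (f := f) (m + 1) hfsum
      rw [Finset.sum_range_succ] at h1
      rw [hTdef, ← h1, hBldef, hBgdef]
      abel
    -- the finite part has small rank
    have hBlrank : Module.rank ℝ (LinearMap.range ((-Bl : X →L[ℝ] Y) : X →ₗ[ℝ] Y)) < ((Rm : Cardinal) + 1) := by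
      have hneg : (-Bl) = ∑ j ∈ Finset.range m, (-(1:ℝ)) • f j := by
        rw [hBldef, ← Finset.sum_neg_distrib]
        congr 1
        funext j
        rw [neg_one_smul]
      have hrank := rank_range_sum_le X Y (Finset.range m) (fun j => (-(1:ℝ)) • f j)
        (fun j => nn j + 1) (fun j _ => rank_range_smul_le X Y _ _ _ (hfrank j))
      have hsum_eq : ∑ j ∈ Finset.range m, (nn j + 1) = Rm := by
        rw [hRmdef, auxR_eq_sum C p q' m]
      rw [hneg]
      refine lt_of_le_of_lt (le_trans hrank (le_of_eq (by rw [hsum_eq]))) ?_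
      have : ((Rm : ℕ) : Cardinal) < (((Rm + 1 : ℕ)) : Cardinal) := Nat.cast_lt.mpr (Nat.lt_succ_self Rm)
      rwa [Nat.cast_add, Nat.cast_one] at this
    have hs_neg_Bl : σ.s X Y (-Bl) Rm = 0 := σ.rank_small X Y _ Rm hBlrank
    -- step 1 : remove the finite part
    have h1 : σ.s X Y (f m + Bg) (k + Rm) ≤ σ.s X Y T k := by
      have h := σ.add_le X Y T (-Bl) k Rm
      rw [hs_neg_Bl, add_zero] at h
      have heq : T + (-Bl) = f m + Bg := by rw [← hsplit]; abel
      rwa [heq] at h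
    -- step 2 : remove the tail
    have h2 : σ.s X Y (f m) (k + Rm) ≤ σ.s X Y (f m + Bg) (k + Rm) + ‖Bg‖ := by
      have h := σ.add_le X Y (f m + Bg) (-Bg) (k + Rm) 0
      rw [σ.first_eq_norm, norm_neg] at h
      have heq : (f m + Bg) + (-Bg) = f m := by abel
      rw [heq, Nat.add_zero] at h
      exact h
    -- step 3 : homogeneity
    have h3 : ε ^ m * σ.s X Y (Tb (nn m)) (k + Rm) ≤ σ.s X Y (f m) (k + Rm) := by
      have h := le_s_smul σ X Y (ε ^ m) (pow_ne_zero m hε0.ne') (Tb (nn m)) (k + Rm)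
      rw [abs_of_pos (pow_pos hε0 m)] at h
      exact h
    -- step 4 : lower bound for the block
    have h4 : 1 ≤ C ^ 3 * σ.s X Y (Tb (nn m)) (k + Rm) := by
      refine one_le_s_buildT σ X Y hC _ _ _ _ (hPP _) (hQQ _) (hQn _) (huY _) (huXs _) ?_
      show k + Rm ≤ nn m
      have : nn m = auxR C p q' m + auxN C p q' m := rfl
      omega
    -- tail norm estimate
    have hBg : ‖Bg‖ ≤ ε ^ m / (2 * C ^ 3) := by
      have hnormsum : Summable (fun j => ‖f j‖) :=
        Summable.of_nonneg_of_le (fun _ => norm_nonneg _) hfnorm hgeo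
      have hshift : Summable (fun j => ‖f (j + (m + 1))‖) :=
        (summable_nat_add_iff (m + 1)).mpr hnormsum
      have hgeoshift : Summable (fun j : ℕ => (C ^ 3 * ε ^ (m + 1)) * ε ^ j) :=
        (summable_geometric_of_lt_one hε0.le hε1).mul_left _
      have hptwise : ∀ j : ℕ, ‖f (j + (m + 1))‖ ≤ (C ^ 3 * ε ^ (m + 1)) * ε ^ j := by
        intro j
        calc ‖f (j + (m + 1))‖ ≤ C ^ 3 * ε ^ (j + (m + 1)) := hfnorm _
        _ = (C ^ 3 * ε ^ (m + 1)) * ε ^ j := by rw [pow_add]; ring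
      calc ‖Bg‖ ≤ ∑' j, ‖f (j + (m + 1))‖ := norm_tsum_le_tsum_norm hshift
      _ ≤ ∑' j : ℕ, (C ^ 3 * ε ^ (m + 1)) * ε ^ j := Summable.tsum_le_tsum hptwise hshift hgeoshift
      _ = (C ^ 3 * ε ^ (m + 1)) * (1 - ε)⁻¹ := by
          rw [tsum_mul_left, tsum_geometric_of_lt_one hε0.le hε1]
      _ ≤ (C ^ 3 * ε ^ (m + 1)) * 2 := by
          refine mul_le_mul_of_nonneg_left ?_ (by positivity)
          rw [inv_le_comm₀ (by linarith) (by norm_num)]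
          linarith
      _ = ε ^ m / (2 * C ^ 3) := by
          rw [pow_succ, hεdef]
          unfold auxEps
          field_simp
          have h6 : C ^ 6 * 4 ≠ 0 := by positivity
          calc _ = (1 / (C ^ 6 * 4)) ^ m * ((C ^ 6 * 4) * (1 / (C ^ 6 * 4))) := by ring
          _ = _ := by rw [mul_one_div_cancel h6, mul_one]
    -- combine
    have hδeq : auxDelta C m = ε ^ m / (2 * C ^ 3) := by rw [hεdef]; rfl
    have hTblow : ε ^ m / C ^ 3 ≤ ε ^ m * σ.s X Y (Tb (nn m)) (k + Rm) := by
      have hs : 1 / C ^ 3 ≤ σ.s X Y (Tb (nn m)) (k + Rm) := by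
        rw [div_le_iff₀ (by positivity : (0:ℝ) < C ^ 3), mul_comm]
        exact h4
      calc ε ^ m / C ^ 3 = ε ^ m * (1 / C ^ 3) := by ring
      _ ≤ ε ^ m * σ.s X Y (Tb (nn m)) (k + Rm) :=
          mul_le_mul_of_nonneg_left hs (pow_pos hε0 m).le
    have harith : ε ^ m / C ^ 3 - ε ^ m / (2 * C ^ 3) = ε ^ m / (2 * C ^ 3) := by
      field_simp
      ring
    rw [hδeq]
    linarith
  refine ⟨T, ?_, ?_⟩
  · -- approximability
    show T ∈ closure {R : X →L[ℝ] Y | FiniteDimensional ℝ (LinearMap.range (R : X →ₗ[ℝ] Y))}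
    have htend := hfsum.hasSum.tendsto_sum_nat
    refine mem_closure_of_tendsto htend (Filter.Eventually.of_forall fun M => ?_)
    show FiniteDimensional ℝ (LinearMap.range ((∑ i ∈ Finset.range M, f i : X →L[ℝ] Y) : X →ₗ[ℝ] Y))
    exact finiteDimensional_range_sum X Y _ f (fun j => nn j + 1) (fun j _ => hfrank j)
  · -- not in the Lorentz class
    intro hmem
    by_cases hqt : q = ⊤
    · rw [memLs, if_pos hqt] at hmem
      obtain ⟨M, hM⟩ := hmem
      set m : ℕ := ⌈M⌉₊ with hmdef
      set k : ℕ := auxN C p q' m with hkdef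
      have h1 := key m k le_rfl
      have h2 := auxN_prop1 (C := C) (p := p) (q' := q') hC hp m
      have h3 := hM k
      have hrp : (0:ℝ) ≤ ((k : ℝ) + 1) ^ (1/p) := Real.rpow_nonneg (by positivity) _
      have hA : (m : ℝ) + 1 ≤ M :=
        le_trans (le_trans h2 (mul_le_mul_of_nonneg_left h1 hrp)) h3
      have hB : M ≤ (m : ℝ) := Nat.le_ceil M
      linarith
    · rw [memLs, if_neg hqt] at hmem
      have hq'0 : 0 < q' := ENNReal.toReal_pos hq.ne' hqt
      set g : ℕ → ℝ :=
        fun n => (((n : ℝ) + 1) ^ (1/p - 1/q') * σ.s X Y T n) ^ q' with hgdef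
      have hmem' : Summable g := hmem
      have hgnn : ∀ n, 0 ≤ g n := fun n =>
        Real.rpow_nonneg
          (mul_nonneg (Real.rpow_nonneg (by positivity) _) (σ.nonneg X Y T n)) _
      have hbound : ∀ m : ℕ, (m : ℝ) + 1 ≤ ∑' n, g n := by
        intro m
        set N : ℕ := auxN C p q' m with hNdef
        set δ : ℝ := auxDelta C m with hδdef
        have hδ : 0 < δ := auxDelta_pos hC m
        have hδq : 0 < δ ^ q' := Real.rpow_pos_of_pos hδ q'
        have hpartial : ∀ s : ℝ,
            (∀ n ∈ Finset.range (N + 1), s ≤ g n) →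
            ((N : ℝ) + 1) * s ≤ ∑' n, g n := by
          intro s hs
          calc ((N : ℝ) + 1) * s = ∑ _n ∈ Finset.range (N + 1), s := by
                rw [Finset.sum_const, Finset.card_range, nsmul_eq_mul]
                push_cast
                ring
          _ ≤ ∑ n ∈ Finset.range (N + 1), g n := Finset.sum_le_sum hs
          _ ≤ ∑' n, g n := Summable.sum_le_tsum _ (fun i _ => hgnn i) hmem'
        rcases le_or_gt 0 (1/p - 1/q') with hα | hα
        · -- α ≥ 0 : each term is at least δ^q'
          have hlow : ∀ n ∈ Finset.range (N + 1), δ ^ q' ≤ g n := by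
            intro n hn
            have hs : δ ≤ σ.s X Y T n := key m n (Nat.lt_succ_iff.mp (Finset.mem_range.mp hn))
            have hone : (1:ℝ) ≤ ((n : ℝ) + 1) ^ (1/p - 1/q') :=
              Real.one_le_rpow (le_add_of_nonneg_left (Nat.cast_nonneg n)) hα
            have hbase : δ ≤ ((n : ℝ) + 1) ^ (1/p - 1/q') * σ.s X Y T n := by
              calc δ = 1 * δ := (one_mul δ).symm
              _ ≤ ((n : ℝ) + 1) ^ (1/p - 1/q') * σ.s X Y T n :=
                  mul_le_mul hone hs hδ.le (le_trans zero_le_one hone)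
            exact Real.rpow_le_rpow hδ.le hbase hq'0.le
          have := hpartial (δ ^ q') hlow
          refine le_trans ?_ this
          have := auxN_prop2 (C := C) (p := p) (q' := q') hC m
          exact this
        · -- α < 0 : compare with the value at N
          have hNpos : (0:ℝ) < (N : ℝ) + 1 := by positivity
          have hlow : ∀ n ∈ Finset.range (N + 1),
              (((N : ℝ) + 1) ^ (1/p - 1/q') * δ) ^ q' ≤ g n := by
            intro n hn
            have hn' : n ≤ N := Nat.lt_succ_iff.mp (Finset.mem_range.mp hn)
            have hs : δ ≤ σ.s X Y T n := key m n hn'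
            have hmono : ((N : ℝ) + 1) ^ (1/p - 1/q') ≤ ((n : ℝ) + 1) ^ (1/p - 1/q') :=
              Real.rpow_le_rpow_of_nonpos (by positivity)
                (by exact_mod_cast add_le_add_left (Nat.cast_le.mpr hn') 1) hα.le
            have hbase : ((N : ℝ) + 1) ^ (1/p - 1/q') * δ ≤
                ((n : ℝ) + 1) ^ (1/p - 1/q') * σ.s X Y T n :=
              mul_le_mul hmono hs hδ.le (Real.rpow_nonneg (by positivity) _)
            exact Real.rpow_le_rpow
              (mul_nonneg (Real.rpow_nonneg hNpos.le _) hδ.le) hbase hq'0.le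
          have hps := hpartial _ hlow
          refine le_trans ?_ hps
          have hsplitpow : (((N : ℝ) + 1) ^ (1/p - 1/q') * δ) ^ q' =
              ((N : ℝ) + 1) ^ ((1/p - 1/q') * q') * δ ^ q' := by
            rw [Real.mul_rpow (Real.rpow_nonneg hNpos.le _) hδ.le, ← Real.rpow_mul hNpos.le]
          have hcollect : ((N : ℝ) + 1) * (((N : ℝ) + 1) ^ ((1/p - 1/q') * q') * δ ^ q') =
              ((N : ℝ) + 1) ^ (1 + (1/p - 1/q') * q') * δ ^ q' := by
            rw [Real.rpow_add hNpos, Real.rpow_one]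
            ring
          have hexp : 1 + (1/p - 1/q') * q' = q'/p := by
            field_simp
            ring
          rw [hsplitpow, hcollect, hexp]
          exact auxN_prop3 (C := C) hC hp hq'0 m
      set t : ℝ := ∑' n, g n with htdef
      have h1 := hbound ⌈t⌉₊
      have h2 : t ≤ (⌈t⌉₊ : ℝ) := Nat.le_ceil t
      linarith
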